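/- arXiv:0710.3894 — 3 statements merged into one kernel-verified Lean document; each statement's English description precedes it below -/
import Mathlib

section
/- Fix n ≥ 1 and constants C, c > 0. Suppose T_N (N ∈ ℕ) are trace-class operators on a Hilbert space satisfying ‖T_N‖ ≤ e^{CN} and μ_k(T_N) ≤ e^{CN - c k^{1/n}} for all k ≥ 1. Then there is a constant C' (depending only on n, C, c) such that |det(I + T_N)| ≤ e^{C' N^{n+1}} for all sufficiently large N. -/
open Real
set_option maxHeartbeats 1000000 in

lemma aux_summable_exp_neg (n : ℕ) (hn : 1 ≤ n) (b : ℝ) (hb : 0 < b) :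
    Summable (fun k : ℕ => Real.exp (-(b * ((k : ℝ) + 1) ^ ((n : ℝ)⁻¹)))) := by
  have hn0 : (n : ℝ) ≠ 0 := Nat.cast_ne_zero.mpr (by omega)
  set F : ℝ := ((2 * n).factorial : ℝ) with hF
  refine Summable.of_nonneg_of_le
    (f := fun k : ℕ => ((b ^ (2 * n))⁻¹ * F) * (((k : ℝ) + 1) ^ 2)⁻¹)
    (fun k => (Real.exp_pos _).le) ?_ ?_
  · intro k
    set x : ℝ := ((k : ℝ) + 1) ^ ((n : ℝ)⁻¹) with hxdef
    have hx0 : (0 : ℝ) ≤ x := by positivity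
    have hbx : (0 : ℝ) ≤ b * x := by positivity
    have hpow : x ^ (2 * n) = ((k : ℝ) + 1) ^ 2 := by
      rw [hxdef, ← Real.rpow_natCast (((k : ℝ) + 1) ^ ((n : ℝ)⁻¹)) (2 * n),
        ← Real.rpow_mul (by positivity : (0 : ℝ) ≤ (k : ℝ) + 1)]
      have h2 : (n : ℝ)⁻¹ * ((2 * n : ℕ) : ℝ) = ((2 : ℕ) : ℝ) := by
        push_cast; field_simp
      rw [h2, Real.rpow_natCast]
    have h1 : (b * x) ^ (2 * n) / F ≤ Real.exp (b * x) := by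
      calc (b * x) ^ (2 * n) / ((2 * n).factorial : ℝ)
          ≤ ∑ i ∈ Finset.range (2 * n + 1), (b * x) ^ i / (i.factorial : ℝ) :=
            Finset.single_le_sum (f := fun i => (b * x) ^ i / (i.factorial : ℝ))
              (fun i _ => by positivity) (Finset.self_mem_range_succ (2 * n))
        _ ≤ Real.exp (b * x) := Real.sum_le_exp_of_nonneg hbx _
    rw [mul_pow, hpow] at h1
    have hy : (0 : ℝ) < b ^ (2 * n) * ((k : ℝ) + 1) ^ 2 / F := by positivity
    rw [Real.exp_neg]
    calc (Real.exp (b * x))⁻¹ ≤ (b ^ (2 * n) * ((k : ℝ) + 1) ^ 2 / F)⁻¹ :=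
          inv_anti₀ hy h1
      _ = (b ^ (2 * n))⁻¹ * F * (((k : ℝ) + 1) ^ 2)⁻¹ := by
          rw [inv_div, div_eq_mul_inv, mul_inv]; ring
  · apply Summable.mul_left
    have : Summable (fun m : ℕ => ((m : ℝ) ^ 2)⁻¹) := by
      simpa only [one_div] using (Real.summable_one_div_nat_pow (p := 2)).mpr one_lt_two
    have := (summable_nat_add_iff 1).mpr this
    simpa [add_comm] using this

set_option maxHeartbeats 1000000 in
/-- Fix `n ≥ 1` and `C, c > 0`.  If `T_N` are trace-class operators whose
singular values `μ N k` (for `k ≥ 1`) satisfy `μ N k ≤ e^{CN}` (operator-norm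
bound) and `μ N k ≤ e^{CN - c k^{1/n}}`, and `D N = det(I + T_N)` satisfies
Weyl's inequality `|D N| ≤ ∏_{k ≥ 1}(1 + μ N k)`, then there is `C'` with
`|det(I + T_N)| ≤ e^{C' N^{n+1}}` for all sufficiently large `N`. -/
theorem stmt8 (n : ℕ) (hn : 1 ≤ n) (C c : ℝ) (hC : 0 < C) (hc : 0 < c)
    (μ : ℕ → ℕ → ℝ) (hpos : ∀ N k, 0 ≤ μ N k)
    (hnorm : ∀ N k, μ N k ≤ Real.exp (C * N))
    (hsing : ∀ N : ℕ, ∀ k : ℕ, 1 ≤ k →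
      μ N k ≤ Real.exp (C * N - c * (k : ℝ) ^ ((n : ℝ)⁻¹)))
    (D : ℕ → ℝ) (hweyl : ∀ N, |D N| ≤ ∏' k : ℕ, (1 + μ N (k + 1))) :
    ∃ C' : ℝ, ∃ N₀ : ℕ, ∀ N : ℕ, N₀ ≤ N →
      |D N| ≤ Real.exp (C' * (N : ℝ) ^ (n + 1)) := by
  have hn0 : (n : ℝ) ≠ 0 := Nat.cast_ne_zero.mpr (by omega)
  set g : ℕ → ℝ := fun k => Real.exp (-(c / 2 * ((k : ℝ) + 1) ^ ((n : ℝ)⁻¹))) with hgdef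
  have hgsum : Summable g := aux_summable_exp_neg n hn (c / 2) (by positivity)
  set S : ℝ := ∑' k, g k with hSdef
  have hS0 : 0 ≤ S := tsum_nonneg (fun k => (Real.exp_pos _).le)
  set A : ℝ := (2 * C / c) ^ n with hAdef
  have hA0 : (0 : ℝ) ≤ A := by positivity
  refine ⟨((⌈A⌉₊ : ℝ) + 1) * (C + 1) + S, 1, fun N hN => ?_⟩
  have hN1 : (1 : ℝ) ≤ (N : ℝ) := by exact_mod_cast hN
  have hCN : (0 : ℝ) ≤ C * N := by positivity
  set M : ℕ := ⌈A⌉₊ * N ^ n with hMdef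
  set f : ℕ → ℝ := fun k => 1 + μ N (k + 1) with hfdef
  have hf1 : ∀ k, (1 : ℝ) ≤ f k := fun k => le_add_of_nonneg_right (hpos N (k + 1))
  have hfpos : ∀ k, (0 : ℝ) < f k := fun k => lt_of_lt_of_le one_pos (hf1 k)
  have hlog_nonneg : ∀ k, 0 ≤ Real.log (f k) := fun k => Real.log_nonneg (hf1 k)
  have hlog_le : ∀ k : ℕ, Real.log (f k) ≤ μ N (k + 1) := by
    intro k
    have := Real.log_le_sub_one_of_pos (hfpos k)
    simpa [hfdef] using this
  have hsing' : ∀ k : ℕ,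
      μ N (k + 1) ≤ Real.exp (C * N - c * ((k : ℝ) + 1) ^ ((n : ℝ)⁻¹)) := by
    intro k
    have := hsing N (k + 1) (by omega)
    push_cast at this
    convert this using 4 <;> push_cast <;> ring
  -- key tail bound
  have hkey : ∀ k : ℕ, M ≤ k → Real.log (f k) ≤ g k := by
    intro k hk
    have hy0 : (0 : ℝ) ≤ 2 * C * N / c := by positivity
    have hMA : A * (N : ℝ) ^ n ≤ (k : ℝ) + 1 := by
      have h1 : A * (N : ℝ) ^ n ≤ (⌈A⌉₊ : ℝ) * (N : ℝ) ^ n :=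
        mul_le_mul_of_nonneg_right (Nat.le_ceil A) (by positivity)
      have h2 : ((M : ℕ) : ℝ) ≤ (k : ℝ) + 1 := by
        have : (M : ℝ) ≤ (k : ℝ) := Nat.cast_le.mpr hk
        linarith
      have h3 : ((M : ℕ) : ℝ) = (⌈A⌉₊ : ℝ) * (N : ℝ) ^ n := by
        rw [hMdef]; push_cast; ring
      linarith [h3 ▸ h2]
    have hyn : (2 * C * N / c) ^ n ≤ (k : ℝ) + 1 := by
      have : (2 * C * N / c) ^ n = A * (N : ℝ) ^ n := by
        rw [hAdef, ← mul_pow]; ring_nf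
      linarith [this ▸ hMA]
    have hx : 2 * C * N / c ≤ ((k : ℝ) + 1) ^ ((n : ℝ)⁻¹) := by
      have h1 : (2 * C * N / c) = ((2 * C * N / c) ^ n) ^ ((n : ℝ)⁻¹) := by
        rw [← Real.rpow_natCast (2 * C * N / c) n, ← Real.rpow_mul hy0,
          mul_inv_cancel₀ hn0, Real.rpow_one]
      rw [h1]
      exact Real.rpow_le_rpow (by positivity) hyn (by positivity)
    have hCNle : C * N ≤ c / 2 * ((k : ℝ) + 1) ^ ((n : ℝ)⁻¹) := by
      have := mul_le_mul_of_nonneg_left hx (le_of_lt (half_pos hc))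
      calc C * N = c / 2 * (2 * C * N / c) := by field_simp
        _ ≤ c / 2 * ((k : ℝ) + 1) ^ ((n : ℝ)⁻¹) := this
    calc Real.log (f k) ≤ μ N (k + 1) := hlog_le k
      _ ≤ Real.exp (C * N - c * ((k : ℝ) + 1) ^ ((n : ℝ)⁻¹)) := hsing' k
      _ ≤ g k := by
          rw [hgdef]
          apply Real.exp_le_exp.mpr
          linarith
  -- summability of logs
  have hsl : Summable (fun k => Real.log (f k)) := by
    refine Summable.of_nonneg_of_le hlog_nonneg (fun k => ?_) (hgsum.mul_left (Real.exp (C * N)))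
    have h1 := (hlog_le k).trans (hsing' k)
    have h2 : Real.exp (C * N - c * ((k : ℝ) + 1) ^ ((n : ℝ)⁻¹))
        ≤ Real.exp (C * N) * g k := by
      rw [hgdef, ← Real.exp_add]
      apply Real.exp_le_exp.mpr
      have hx0 : (0 : ℝ) ≤ ((k : ℝ) + 1) ^ ((n : ℝ)⁻¹) := by positivity
      nlinarith
    exact h1.trans h2
  -- tprod = exp of tsum of logs
  have hprod : (∏' k, f k) = Real.exp (∑' k, Real.log (f k)) := by
    have h1 : HasProd (fun k => Real.exp (Real.log (f k)))
        (Real.exp (∑' k, Real.log (f k))) := hsl.hasSum.rexp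
    have h2 : HasProd f (Real.exp (∑' k, Real.log (f k))) := by
      refine h1.congr_fun ?_
      intro k
      exact (Real.exp_log (hfpos k)).symm
    exact h2.tprod_eq
  -- split the sum
  have hsplit := Summable.sum_add_tsum_nat_add (f := fun k => Real.log (f k)) M hsl
  have hhead : ∑ k ∈ Finset.range M, Real.log (f k) ≤ (M : ℝ) * (C * N + 1) := by
    have hterm : ∀ k : ℕ, Real.log (f k) ≤ C * N + 1 := by
      intro k
      have he1 : (1 : ℝ) ≤ Real.exp (C * N) := Real.one_le_exp hCN
      have h1 : f k ≤ 2 * Real.exp (C * N) := by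
        have := hnorm N (k + 1)
        simp only [hfdef]
        linarith
      calc Real.log (f k) ≤ Real.log (2 * Real.exp (C * N)) :=
            Real.log_le_log (hfpos k) h1
        _ = Real.log 2 + C * N := by
            rw [Real.log_mul two_ne_zero (Real.exp_ne_zero _), Real.log_exp]
        _ ≤ C * N + 1 := by
            have h2 : Real.log 2 ≤ 1 := by
              have := Real.log_le_sub_one_of_pos (by norm_num : (0:ℝ) < 2)
              linarith
            linarith
    calc ∑ k ∈ Finset.range M, Real.log (f k)
        ≤ ∑ _k ∈ Finset.range M, (C * N + 1) :=
          Finset.sum_le_sum (fun k _ => hterm k)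
      _ = (M : ℝ) * (C * N + 1) := by
          rw [Finset.sum_const, Finset.card_range, nsmul_eq_mul]
  have htail : ∑' k : ℕ, Real.log (f (k + M)) ≤ S := by
    refine Summable.tsum_le_tsum (fun k => ?_) ((summable_nat_add_iff M).mpr hsl) hgsum
    have h1 : Real.log (f (k + M)) ≤ g (k + M) := hkey (k + M) (Nat.le_add_left M k)
    have h2 : g (k + M) ≤ g k := by
      rw [hgdef]
      apply Real.exp_le_exp.mpr
      have hr : ((k : ℝ) + 1) ^ ((n : ℝ)⁻¹) ≤ (((k + M : ℕ) : ℝ) + 1) ^ ((n : ℝ)⁻¹) := by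
        apply Real.rpow_le_rpow (by positivity) (by push_cast; linarith [Nat.cast_nonneg (α := ℝ) M]) (by positivity)
      nlinarith [hr, half_pos hc]
    exact h1.trans h2
  have hlogsum : ∑' k : ℕ, Real.log (f k) ≤ (M : ℝ) * (C * N + 1) + S := by
    rw [← hsplit]; exact add_le_add hhead htail
  -- final arithmetic
  have hMcast : (M : ℝ) = (⌈A⌉₊ : ℝ) * (N : ℝ) ^ n := by rw [hMdef]; push_cast; ring
  have hpow2 : (N : ℝ) ^ n ≤ (N : ℝ) ^ (n + 1) := pow_le_pow_right₀ hN1 (Nat.le_succ n)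
  have hpow1 : (1 : ℝ) ≤ (N : ℝ) ^ (n + 1) := one_le_pow₀ hN1
  have hfinal : (M : ℝ) * (C * N + 1) + S
      ≤ (((⌈A⌉₊ : ℝ) + 1) * (C + 1) + S) * (N : ℝ) ^ (n + 1) := by
    have hceil : (0 : ℝ) ≤ (⌈A⌉₊ : ℝ) := Nat.cast_nonneg _
    have hNn : (0 : ℝ) ≤ (N : ℝ) ^ n := by positivity
    have h1 : (N : ℝ) ^ n * (C * N + 1) ≤ (C + 1) * (N : ℝ) ^ (n + 1) := by
      have : (N : ℝ) ^ n * (C * N) = C * (N : ℝ) ^ (n + 1) := by ring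
      nlinarith
    rw [hMcast]
    nlinarith [mul_le_mul_of_nonneg_left h1 hceil, hS0, hpow1]
  calc |D N| ≤ ∏' k : ℕ, (1 + μ N (k + 1)) := hweyl N
    _ = Real.exp (∑' k, Real.log (f k)) := hprod
    _ ≤ Real.exp ((((⌈A⌉₊ : ℝ) + 1) * (C + 1) + S) * (N : ℝ) ^ (n + 1)) :=
        Real.exp_le_exp.mpr (hlogsum.trans hfinal)
end

section
/- Let R ⊂ ℂ be a multiset (a set with multiplicities) with counting function N(r) := #{ζ ∈ R : |ζ| ≤ r} satisfying N(r) ≤ C r^{n+1} for all r ≥ 1, where n ≥ 1 and C > 0. Suppose there exist constants c₀ > 0 and λ₀ ≥ 1 such that ∑_{ζ ∈ R} (1 + |ζ|/λ)^{-(n+2)} ≥ c₀ λ^{n+1} for all λ ≥ λ₀. Then there exist c' > 0 and r₀ such that N(r) ≥ c' r^{n+1} for all r ≥ r₀. -/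
private lemma term_eq (C A lam : ℝ) (hA : A ≠ 0) (n k : ℕ) :
    C * (2^(k+1) * (A*lam))^(n+1) * (((2:ℝ)^k * A)^(n+2))⁻¹
      = C * 2^(n+1) * lam^(n+1) / A * (1/2)^k := by
  rw [one_div, inv_pow]
  field_simp
  ring

/-- Tauberian step: if a (multi)set of complex numbers, listed with multiplicity by a
sequence `ζ`, has counting function `N(r) = #{j : |ζ j| ≤ r}` finite and `≤ C r^{n+1}`
for `r ≥ 1`, and if `∑_j (1 + |ζ j|/λ)^{-(n+2)} ≥ c₀ λ^{n+1}` for all `λ ≥ λ₀`, then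
`N(r) ≥ c' r^{n+1}` for all large `r`. -/
theorem stmt9 (n : ℕ) (hn : 1 ≤ n) (C : ℝ) (hC : 0 < C) (ζ : ℕ → ℂ)
    (hfin : ∀ r : ℝ, {j : ℕ | ‖ζ j‖ ≤ r}.Finite)
    (hupper : ∀ r : ℝ, 1 ≤ r →
      ({j : ℕ | ‖ζ j‖ ≤ r}.ncard : ℝ) ≤ C * r ^ (n + 1))
    (c₀ lam₀ : ℝ) (hc₀ : 0 < c₀) (hlam₀ : 1 ≤ lam₀)
    (hlower : ∀ lam : ℝ, lam₀ ≤ lam →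
      c₀ * lam ^ (n + 1) ≤ ∑' j : ℕ, ((1 + ‖ζ j‖ / lam) ^ (n + 2))⁻¹) :
    ∃ c' > (0 : ℝ), ∃ r₀ : ℝ, ∀ r : ℝ, r₀ ≤ r →
      c' * r ^ (n + 1) ≤ ({j : ℕ | ‖ζ j‖ ≤ r}.ncard : ℝ) := by
  set A : ℝ := max 1 (2^(n+3) * C / c₀) with hAdef
  have hA1 : (1:ℝ) ≤ A := le_max_left _ _
  have hA0 : (0:ℝ) < A := lt_of_lt_of_le one_pos hA1
  have hAc : 2^(n+2) * C / A * 2 ≤ c₀ := by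
    have h2 : 2^(n+3)*C/c₀ ≤ A := le_max_right _ _
    rw [div_mul_eq_mul_div, div_le_iff₀ hA0]
    calc 2^(n+2) * C * 2 = 2^(n+3) * C := by ring
      _ = c₀ * (2^(n+3)*C/c₀) := by field_simp
      _ ≤ c₀ * A := by
          exact mul_le_mul_of_nonneg_left h2 hc₀.le
  -- key step: for all lam ≥ lam₀, N(A*lam) ≥ (c₀/2) * lam^(n+1)
  have key : ∀ lam : ℝ, lam₀ ≤ lam →
      c₀/2 * lam^(n+1) ≤ ({j : ℕ | ‖ζ j‖ ≤ A*lam}.ncard : ℝ) := by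
    intro lam hlam
    have hlam1 : (1:ℝ) ≤ lam := le_trans hlam₀ hlam
    have hlam0 : (0:ℝ) < lam := lt_of_lt_of_le one_pos hlam1
    have hAl1 : (1:ℝ) ≤ A * lam := by nlinarith
    have hAl0 : (0:ℝ) < A * lam := lt_of_lt_of_le one_pos hAl1
    set N : ℝ := ({j : ℕ | ‖ζ j‖ ≤ A*lam}.ncard : ℝ) with hNdef
    have hN0 : 0 ≤ N := Nat.cast_nonneg _
    set f : ℕ → ℝ := fun j => ((1 + ‖ζ j‖ / lam) ^ (n + 2))⁻¹ with hfdef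
    have hf0 : ∀ j, 0 ≤ f j := by
      intro j
      have : (0:ℝ) ≤ 1 + ‖ζ j‖ / lam := by positivity
      positivity
    -- every finite partial sum is bounded
    have hbound : ∀ s : Finset ℕ, ∑ j ∈ s, f j ≤ N + c₀/2 * lam^(n+1) := by
      intro s
      classical
      rw [← Finset.sum_filter_add_sum_filter_not s (fun j => ‖ζ j‖ ≤ A*lam)]
      have hs0 : ∑ j ∈ s.filter (fun j => ‖ζ j‖ ≤ A*lam), f j ≤ N := by
        calc ∑ j ∈ s.filter (fun j => ‖ζ j‖ ≤ A*lam), f j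
            ≤ ∑ _j ∈ s.filter (fun j => ‖ζ j‖ ≤ A*lam), (1:ℝ) := by
              apply Finset.sum_le_sum
              intro j hj
              have h1 : (1:ℝ) ≤ 1 + ‖ζ j‖ / lam := by
                have := norm_nonneg (ζ j)
                have : 0 ≤ ‖ζ j‖ / lam := by positivity
                linarith
              have h2 : (1:ℝ) ≤ (1 + ‖ζ j‖ / lam) ^ (n+2) :=
                one_le_pow₀ h1
              exact inv_le_one_of_one_le₀ h2
          _ = ((s.filter (fun j => ‖ζ j‖ ≤ A*lam)).card : ℝ) := by
              simp
          _ ≤ N := by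
              rw [hNdef, Set.ncard_eq_toFinset_card _ (hfin (A*lam))]
              · norm_cast
                apply Finset.card_le_card
                intro j hj
                simp only [Finset.mem_filter] at hj
                simp [Set.Finite.mem_toFinset, Set.mem_setOf_eq, hj.2]
      have hs1 : ∑ j ∈ s.filter (fun j => ¬ ‖ζ j‖ ≤ A*lam), f j
          ≤ c₀/2 * lam^(n+1) := by
        set s₁ := s.filter (fun j => ¬ ‖ζ j‖ ≤ A*lam) with hs₁def
        have hex : ∀ j : ℕ, ∃ k : ℕ, ‖ζ j‖ ≤ 2^(k+1) * (A*lam) := by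
          intro j
          obtain ⟨k, hk⟩ := pow_unbounded_of_one_lt (‖ζ j‖) (one_lt_two (α := ℝ))
          refine ⟨k, hk.le.trans ?_⟩
          calc (2:ℝ)^k ≤ 2^(k+1) := by
                apply pow_le_pow_right₀ one_le_two (Nat.le_succ k)
            _ = 2^(k+1) * 1 := (mul_one _).symm
            _ ≤ 2^(k+1) * (A*lam) := by
                apply mul_le_mul_of_nonneg_left hAl1 (by positivity)
        set g : ℕ → ℕ := fun j => Nat.find (hex j) with hgdef
        have hgspec : ∀ j, ‖ζ j‖ ≤ 2^(g j + 1) * (A*lam) := fun j => Nat.find_spec (hex j)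
        have hglow : ∀ j ∈ s₁, 2^(g j) * (A*lam) < ‖ζ j‖ := by
          intro j hj
          simp only [hs₁def, Finset.mem_filter, not_le] at hj
          rcases Nat.eq_zero_or_pos (g j) with h0 | hpos
          · rw [h0]; simpa using hj.2
          · have := Nat.find_min (hex j) (Nat.sub_lt hpos one_pos)
            push_neg at this
            have heq : g j - 1 + 1 = g j := Nat.succ_pred_eq_of_pos hpos
            rwa [heq] at this
        -- choose K: all elements of s are below 2^(K+1)*(A*lam)
        obtain ⟨K, hK⟩ := pow_unbounded_of_one_lt (∑ j ∈ s, ‖ζ j‖) (one_lt_two (α := ℝ))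
        have hgK : ∀ j ∈ s₁, g j ∈ Finset.range (K+1) := by
          intro j hj
          have hjs : j ∈ s := Finset.mem_of_mem_filter j hj
          have hle : ‖ζ j‖ ≤ 2^(K+1) * (A*lam) := by
            calc ‖ζ j‖ ≤ ∑ j ∈ s, ‖ζ j‖ :=
                  Finset.single_le_sum (fun i _ => norm_nonneg (ζ i)) hjs
              _ ≤ 2^K := hK.le
              _ ≤ 2^(K+1) := pow_le_pow_right₀ one_le_two (Nat.le_succ K)
              _ = 2^(K+1) * 1 := (mul_one _).symm
              _ ≤ 2^(K+1) * (A*lam) := mul_le_mul_of_nonneg_left hAl1 (by positivity)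
          have : g j ≤ K := Nat.find_le hle
          simp [Nat.lt_succ_iff, this]
        rw [← Finset.sum_fiberwise_of_maps_to hgK f]
        have hinner : ∀ k ∈ Finset.range (K+1),
            ∑ j ∈ s₁.filter (fun j => g j = k), f j
              ≤ C * 2^(n+1) * lam^(n+1) / A * (1/2)^k := by
          intro k _
          have hpos2k : (0:ℝ) < 2^k * A := by positivity
          calc ∑ j ∈ s₁.filter (fun j => g j = k), f j
              ≤ ∑ _j ∈ s₁.filter (fun j => g j = k), ((2^k * A)^(n+2))⁻¹ := by
                apply Finset.sum_le_sum
                intro j hj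
                simp only [Finset.mem_filter] at hj
                have hjlow := hglow j hj.1
                rw [hj.2] at hjlow
                have hq : (2:ℝ)^k * A ≤ 1 + ‖ζ j‖ / lam := by
                  have : (2:ℝ)^k * A < ‖ζ j‖ / lam := by
                    rw [lt_div_iff₀ hlam0]; nlinarith
                  linarith
                apply inv_anti₀ (by positivity)
                exact pow_le_pow_left₀ hpos2k.le hq _
            _ = ((s₁.filter (fun j => g j = k)).card : ℝ) * ((2^k * A)^(n+2))⁻¹ := by
                rw [Finset.sum_const, nsmul_eq_mul]
            _ ≤ C * (2^(k+1) * (A*lam))^(n+1) * ((2^k * A)^(n+2))⁻¹ := by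
                apply mul_le_mul_of_nonneg_right _ (by positivity)
                have hcard : ((s₁.filter (fun j => g j = k)).card : ℝ)
                    ≤ ({j : ℕ | ‖ζ j‖ ≤ 2^(k+1) * (A*lam)}.ncard : ℝ) := by
                  rw [Set.ncard_eq_toFinset_card _ (hfin _)]
                  norm_cast
                  apply Finset.card_le_card
                  intro j hj
                  simp only [Finset.mem_filter] at hj
                  have := hgspec j
                  rw [hj.2] at this
                  simp [Set.Finite.mem_toFinset, Set.mem_setOf_eq, this]
                refine hcard.trans (hupper _ ?_)
                calc (1:ℝ) ≤ A*lam := hAl1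
                  _ = 1 * (A*lam) := (one_mul _).symm
                  _ ≤ 2^(k+1) * (A*lam) := by
                      apply mul_le_mul_of_nonneg_right _ hAl0.le
                      exact one_le_pow₀ one_le_two
            _ = C * 2^(n+1) * lam^(n+1) / A * (1/2)^k := term_eq C A lam hA0.ne' n k
        calc ∑ k ∈ Finset.range (K+1), ∑ j ∈ s₁.filter (fun j => g j = k), f j
            ≤ ∑ k ∈ Finset.range (K+1), C * 2^(n+1) * lam^(n+1) / A * (1/2)^k :=
              Finset.sum_le_sum hinner
          _ = C * 2^(n+1) * lam^(n+1) / A * ∑ k ∈ Finset.range (K+1), (1/2)^k := by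
              rw [Finset.mul_sum]
          _ ≤ C * 2^(n+1) * lam^(n+1) / A * 2 := by
              apply mul_le_mul_of_nonneg_left (sum_geometric_two_le _) (by positivity)
          _ = (2^(n+2) * C / A * 2) / 2 * lam^(n+1) := by ring
          _ ≤ c₀ / 2 * lam^(n+1) := by
              apply mul_le_mul_of_nonneg_right _ (by positivity)
              linarith
      linarith
    have htsum : ∑' j, f j ≤ N + c₀/2 * lam^(n+1) := by
      apply tsum_le_of_sum_le' (by positivity) hbound
    have hlow := hlower lam hlam
    have : c₀ * lam^(n+1) ≤ N + c₀/2 * lam^(n+1) := le_trans hlow htsum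
    linarith
  -- conclude
  refine ⟨c₀ / 2 / A^(n+1), by positivity, A * lam₀, ?_⟩
  intro r hr
  have hlam : lam₀ ≤ r / A := by
    rw [le_div_iff₀ hA0, mul_comm]
    exact hr
  have h1 := key (r / A) hlam
  have hrw : A * (r / A) = r := by field_simp
  rw [hrw] at h1
  calc c₀ / 2 / A^(n+1) * r^(n+1) = c₀/2 * (r/A)^(n+1) := by
        rw [div_pow]; ring
    _ ≤ _ := h1
end

section
/- Let n ≥ 1, N ∈ ℕ and s ∈ ℂ with 2N - 2|Re s| > n. Then the integral ∫_{B} y^{2 Re s + 2N - n - 1} (|x|² + y²)^{-2 Re s} dx dy over the half-ball B = {(x,y) ∈ ℝ^n × (0,1) : |x|² + y² < 1} is finite. -/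
open MeasureTheory

/-- For `n ≥ 1`, `N ∈ ℕ` and `s ∈ ℂ` with `2N - 2|Re s| > n`, the integral
`∫_B y^{2Re s + 2N - n - 1} (|x|² + y²)^{-2Re s} dx dy` over the half-ball
`B = {(x,y) : |x|² + y² < 1, 0 < y < 1}` is finite. -/
theorem stmt17 (n N : ℕ) (hn : 1 ≤ n) (s : ℂ)
    (h : (n : ℝ) < 2 * N - 2 * |s.re|) :
    IntegrableOn
      (fun p : EuclideanSpace ℝ (Fin n) × ℝ =>
        p.2 ^ (2 * s.re + 2 * N - n - 1) * (‖p.1‖ ^ 2 + p.2 ^ 2) ^ (-(2 * s.re)))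
      {p : EuclideanSpace ℝ (Fin n) × ℝ | 0 < p.2 ∧ p.2 < 1 ∧ ‖p.1‖ ^ 2 + p.2 ^ 2 < 1}
      volume := by
  set a := s.re with ha
  set α : ℝ := 2 * N - 2 * |a| - n - 1 with hαdef
  have hα : (-1 : ℝ) < α := by
    have : (1 : ℝ) ≤ n := by exact_mod_cast hn
    simp only [hαdef]; linarith
  set S : Set (EuclideanSpace ℝ (Fin n) × ℝ) :=
    {p : EuclideanSpace ℝ (Fin n) × ℝ | 0 < p.2 ∧ p.2 < 1 ∧ ‖p.1‖ ^ 2 + p.2 ^ 2 < 1} with hSdef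
  have hm1 : Measurable fun p : EuclideanSpace ℝ (Fin n) × ℝ => ‖p.1‖ ^ 2 + p.2 ^ 2 :=
    (measurable_fst.norm.pow_const 2).add (measurable_snd.pow_const 2)
  have hSmeas : MeasurableSet S :=
    (measurableSet_lt measurable_const measurable_snd).inter
      ((measurableSet_lt measurable_snd measurable_const).inter
        (measurableSet_lt hm1 measurable_const))
  -- dominating function
  have hdom : IntegrableOn (fun p : EuclideanSpace ℝ (Fin n) × ℝ => p.2 ^ α)
      ((Metric.ball (0 : EuclideanSpace ℝ (Fin n)) 1) ×ˢ Set.Ioo (0:ℝ) 1) volume := by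
    rw [IntegrableOn, Measure.volume_eq_prod, ← Measure.prod_restrict]
    have h1 : Integrable (fun _ : EuclideanSpace ℝ (Fin n) => (1 : ℝ))
        (volume.restrict (Metric.ball (0 : EuclideanSpace ℝ (Fin n)) 1)) :=
      integrableOn_const measure_ball_lt_top.ne
    have h2 : Integrable (fun y : ℝ => y ^ α) (volume.restrict (Set.Ioo (0:ℝ) 1)) :=
      (intervalIntegral.integrableOn_Ioo_rpow_iff zero_lt_one).2 hα
    have := h1.mul_prod h2
    simpa using this
  have hsub : S ⊆ (Metric.ball (0 : EuclideanSpace ℝ (Fin n)) 1) ×ˢ Set.Ioo (0:ℝ) 1 := by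
    rintro ⟨x, y⟩ ⟨hy0, hy1, hr⟩
    constructor
    · simp only [Metric.mem_ball, dist_zero_right]
      nlinarith [norm_nonneg x]
    · exact ⟨hy0, hy1⟩
  have hdomS : IntegrableOn (fun p : EuclideanSpace ℝ (Fin n) × ℝ => p.2 ^ α) S volume :=
    hdom.mono_set hsub
  apply Integrable.mono' hdomS
  · have hU : MeasurableSet {p : EuclideanSpace ℝ (Fin n) × ℝ | 0 < p.2} :=
      measurableSet_lt measurable_const measurable_snd
    have hcont : ContinuousOn
        (fun p : EuclideanSpace ℝ (Fin n) × ℝ =>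
          p.2 ^ (2 * a + 2 * N - n - 1) * (‖p.1‖ ^ 2 + p.2 ^ 2) ^ (-(2 * a)))
        {p : EuclideanSpace ℝ (Fin n) × ℝ | 0 < p.2} := by
      apply ContinuousOn.mul
      · exact continuous_snd.continuousOn.rpow_const fun p hp => Or.inl (ne_of_gt hp)
      · refine ContinuousOn.rpow_const ?_ fun p hp => Or.inl (ne_of_gt ?_)
        · exact (((continuous_fst.norm.pow 2).add (continuous_snd.pow 2)).continuousOn)
        · have : (0:ℝ) < p.2 := hp
          nlinarith [sq_nonneg ‖p.1‖]
    exact (hcont.aestronglyMeasurable hU).mono_measure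
      (Measure.restrict_mono (fun p hp => hp.1) le_rfl)
  · filter_upwards [ae_restrict_mem hSmeas] with p hp
    obtain ⟨hy0, hy1, hr⟩ := hp
    set y := p.2
    set r2 : ℝ := ‖p.1‖ ^ 2 + p.2 ^ 2 with hr2
    have hy2r2 : y ^ 2 ≤ r2 := le_add_of_nonneg_left (by positivity)
    have hr2pos : 0 < r2 := lt_of_lt_of_le (by positivity) hy2r2
    have habs : ‖y ^ (2 * a + 2 * N - n - 1) * r2 ^ (-(2 * a))‖
        = y ^ (2 * a + 2 * N - n - 1) * r2 ^ (-(2 * a)) := by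
      rw [Real.norm_eq_abs, abs_of_nonneg]
      positivity
    rw [habs]
    rcases le_or_gt 0 a with hc | hc
    · have h1 : r2 ^ (-(2 * a)) ≤ (y ^ 2) ^ (-(2 * a)) :=
        Real.rpow_le_rpow_of_nonpos (by positivity) hy2r2 (by linarith)
      calc y ^ (2 * a + 2 * N - n - 1) * r2 ^ (-(2 * a))
          ≤ y ^ (2 * a + 2 * N - n - 1) * (y ^ 2) ^ (-(2 * a)) := by
            apply mul_le_mul_of_nonneg_left h1 (by positivity)
        _ = y ^ α := by
            rw [← Real.rpow_natCast y 2, ← Real.rpow_mul hy0.le, ← Real.rpow_add hy0]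
            rw [hαdef, abs_of_nonneg hc]
            congr 1
            push_cast
            ring
    · have h1 : r2 ^ (-(2 * a)) ≤ 1 :=
        Real.rpow_le_one hr2pos.le hr.le (by linarith)
      calc y ^ (2 * a + 2 * N - n - 1) * r2 ^ (-(2 * a))
          ≤ y ^ (2 * a + 2 * N - n - 1) * 1 := by
            apply mul_le_mul_of_nonneg_left h1 (by positivity)
        _ = y ^ α := by
            rw [mul_one]
            rw [hαdef, abs_of_neg hc]
            congr 1
            ring
end
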